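/- arXiv:2403.16625 — 2 statements merged into one kernel-verified Lean document; each statement's English description precedes it below -/
import Mathlib

section
/- Let E be a rank-r free module over a commutative ring R and φ : E → E an endomorphism. Then for all e_1,…,e_r ∈ E, the sum over i of e_1 ∧ … ∧ φ(e_i) ∧ … ∧ e_r equals tr(φ)·(e_1 ∧ … ∧ e_r) in ∧^r E. -/
/-- For a rank-`r` free module `E` over a commutative ring `R` and
`φ : E → E`, for all `e₁,…,e_r ∈ E` one has
`∑ i, e₁ ∧ … ∧ φ(e_i) ∧ … ∧ e_r = tr(φ) • (e₁ ∧ … ∧ e_r)` in `⋀^r E`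
(computed inside the exterior algebra). -/
theorem stmt_3 (R : Type) [CommRing R] (E : Type) [AddCommGroup E] [Module R E]
    [Module.Free R E] [Module.Finite R E] (r : ℕ) (hr : Module.finrank R E = r)
    (φ : E →ₗ[R] E) (v : Fin r → E) :
    ∑ i : Fin r, ExteriorAlgebra.ιMulti R r (Function.update v i (φ (v i)))
      = LinearMap.trace R E φ • ExteriorAlgebra.ιMulti R r v := by
  classical
  rcases subsingleton_or_nontrivial R with hR | hR
  · haveI := Module.subsingleton R (ExteriorAlgebra R E)
    exact Subsingleton.elim _ _
  let b : Module.Basis (Fin r) R E := (Module.finBasis R E).reindex (finCongr hr)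
  -- the multilinear map underlying the LHS
  let Fm : MultilinearMap R (fun _ : Fin r => E) (ExteriorAlgebra R E) :=
    ∑ i : Fin r, (ExteriorAlgebra.ιMulti R r (M := E)).toMultilinearMap.compLinearMap
      (Function.update (fun _ => LinearMap.id) i φ)
  have hFm : ∀ w : Fin r → E,
      Fm w = ∑ i : Fin r, ExteriorAlgebra.ιMulti R r (Function.update w i (φ (w i))) := by
    intro w
    simp only [Fm, MultilinearMap.sum_apply, MultilinearMap.compLinearMap_apply]
    refine Finset.sum_congr rfl fun i _ => congrArg _ (funext fun j => ?_)
    rcases eq_or_ne j i with rfl | h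
    · simp
    · simp [Function.update_of_ne h]
  -- the LHS is alternating
  have hFalt : ∀ (w : Fin r → E) (i j : Fin r), w i = w j → i ≠ j → Fm w = 0 := by
    intro w i j hij hne
    rw [hFm]
    rw [← Finset.sum_erase_add _ _ (Finset.mem_univ i),
        ← Finset.sum_erase_add _ _ (Finset.mem_erase.2 ⟨hne.symm, Finset.mem_univ j⟩)]
    have h0 : ∀ k ∈ ((Finset.univ.erase i).erase j),
        ExteriorAlgebra.ιMulti R r (Function.update w k (φ (w k))) = 0 := by
      intro k hk
      have hki : k ≠ i := (Finset.mem_erase.1 (Finset.mem_erase.1 hk).2).1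
      have hkj : k ≠ j := (Finset.mem_erase.1 hk).1
      refine (ExteriorAlgebra.ιMulti R r).map_eq_zero_of_eq _ (i := i) (j := j) ?_ hne
      simp [Function.update_of_ne (Ne.symm hki), Function.update_of_ne (Ne.symm hkj), hij]
    rw [Finset.sum_eq_zero h0, zero_add]
    have hswap : Function.update w i (φ (w i)) ∘ Equiv.swap i j
        = Function.update w j (φ (w j)) := by
      funext k
      rcases eq_or_ne k i with rfl | hki
      · rw [Function.comp_apply, Equiv.swap_apply_left, Function.update_of_ne hne.symm,
          Function.update_of_ne hne]
        exact hij.symm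
      · rcases eq_or_ne k j with rfl | hkj
        · rw [Function.comp_apply, Equiv.swap_apply_right, Function.update_self,
            Function.update_self]
          exact congrArg φ hij
        · rw [Function.comp_apply, Equiv.swap_apply_of_ne_of_ne hki hkj,
            Function.update_of_ne hki, Function.update_of_ne hkj]
    have hs := (ExteriorAlgebra.ιMulti R r (M := E)).map_swap
      (Function.update w i (φ (w i))) hne
    rw [hswap] at hs
    rw [hs]
    exact neg_add_cancel _
  let F : E [⋀^Fin r]→ₗ[R] ExteriorAlgebra R E :=
    { toMultilinearMap := Fm
      map_eq_zero_of_eq' := fun w i j hij hne => hFalt w i j hij hne }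
  -- key computation on the basis
  have hkey : ∀ i : Fin r, ExteriorAlgebra.ιMulti R r (Function.update b i (φ (b i)))
      = b.repr (φ (b i)) i • ExteriorAlgebra.ιMulti R r b := by
    intro i
    conv_lhs => rw [← b.sum_repr (φ (b i))]
    rw [(ExteriorAlgebra.ιMulti R r (M := E)).map_update_sum Finset.univ i
      (fun k => b.repr (φ (b i)) k • b k) b]
    rw [Finset.sum_eq_single i]
    · simp
    · intro k _ hki
      rw [AlternatingMap.map_update_smul]
      rw [(ExteriorAlgebra.ιMulti R r).map_eq_zero_of_eq
        (Function.update b i (b k)) (i := i) (j := k)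
        (by simp [Function.update_of_ne hki]) (Ne.symm hki)]
      simp
    · simp
  have htr : LinearMap.trace R E φ = ∑ i : Fin r, b.repr (φ (b i)) i := by
    rw [LinearMap.trace_eq_matrix_trace R b φ, Matrix.trace]
    refine Finset.sum_congr rfl fun i _ => ?_
    simp [Matrix.diag, LinearMap.toMatrix_apply]
  have hFb : F b = LinearMap.trace R E φ • ExteriorAlgebra.ιMulti R r b := by
    show Fm b = _
    rw [hFm, htr, Finset.sum_smul]
    exact Finset.sum_congr rfl fun i _ => hkey i
  -- conclude by extensionality on the basis
  have hmain : F = LinearMap.trace R E φ • ExteriorAlgebra.ιMulti R r := by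
    refine Module.Basis.ext_alternating b fun w hw => ?_
    have hbij : Function.Bijective w := Finite.injective_iff_bijective.1 hw
    let σ : Equiv.Perm (Fin r) := Equiv.ofBijective w hbij
    have hwσ : (fun i => b (w i)) = ⇑b ∘ σ := rfl
    rw [hwσ, F.map_perm b σ, (LinearMap.trace R E φ • ExteriorAlgebra.ιMulti R r).map_perm b σ]
    rw [hFb, AlternatingMap.smul_apply]
  calc ∑ i : Fin r, ExteriorAlgebra.ιMulti R r (Function.update v i (φ (v i)))
      = F v := (hFm v).symm
    _ = (LinearMap.trace R E φ • ExteriorAlgebra.ιMulti R r) v := by rw [hmain]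
    _ = _ := AlternatingMap.smul_apply _ _ _
end

section
/- Let E be a rank-2 free module over a commutative ring R, φ ∈ End(E), and α : E → E^* a skew map corresponding to α_1 ∧ α_2 ∈ ∧^2 E^* via [α_1∧α_2](e) = α_1(e)α_2 − α_2(e)α_1. Then the identity α∘φ + φ^*∘α = tr(φ)·α holds in Hom(E, E^*), equivalently α∘φ − (α∘φ)^* = tr(φ)·α. -/
/-- For a rank-2 free module `E` over a commutative ring `R`, `φ ∈ End(E)`,
and the skew map `α : E → E^*` corresponding to `α₁ ∧ α₂ ∈ ∧² E^*` via
`[α₁∧α₂](e) = α₁(e)α₂ − α₂(e)α₁`, one has `α∘φ + φ^*∘α = tr(φ)·α` in `Hom(E,E^*)`. -/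
theorem stmt_4 (R : Type) [CommRing R] (E : Type) [AddCommGroup E] [Module R E]
    [Module.Free R E] [Module.Finite R E] (hrk : Module.finrank R E = 2)
    (φ : E →ₗ[R] E) (α₁ α₂ : Module.Dual R E)
    (α : E →ₗ[R] Module.Dual R E)
    (hα : ∀ e : E, α e = α₁ e • α₂ - α₂ e • α₁) :
    ∀ e : E, α (φ e) + φ.dualMap (α e) = LinearMap.trace R E φ • α e := by
  rcases subsingleton_or_nontrivial R with hR | hR
  · haveI : Subsingleton (Module.Dual R E) := Module.subsingleton R _
    intro e; exact Subsingleton.elim _ _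
  let b : Module.Basis (Fin 2) R E := Module.finBasisOfFinrankEq R E hrk
  have hrepr : ∀ v : E, v = b.repr v 0 • b 0 + b.repr v 1 • b 1 := by
    intro v
    have h := b.sum_repr v
    rw [Fin.sum_univ_two] at h
    exact h.symm
  have htr : LinearMap.trace R E φ
      = b.repr (φ (b 0)) 0 + b.repr (φ (b 1)) 1 := by
    rw [LinearMap.trace_eq_matrix_trace R b φ, Matrix.trace, Fin.sum_univ_two]
    simp [Matrix.diag, LinearMap.toMatrix_apply]
  have key : ∀ i j : Fin 2,
      α (φ (b i)) (b j) + φ.dualMap (α (b i)) (b j)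
        = LinearMap.trace R E φ * α (b i) (b j) := by
    intro i j
    rw [hα, hα, htr]
    simp only [LinearMap.dualMap_apply, hα]
    conv_lhs => rw [hrepr (φ (b i)), hrepr (φ (b j))]
    simp only [map_add, map_smul, LinearMap.add_apply, LinearMap.smul_apply,
      smul_eq_mul, LinearMap.sub_apply]
    fin_cases i <;> fin_cases j <;> simp only [Fin.mk_zero, Fin.mk_one] <;> ring
  intro e
  apply b.ext
  intro j
  conv_lhs => rw [hrepr e]
  conv_rhs => rw [hrepr e]
  simp only [map_add, map_smul, LinearMap.add_apply, LinearMap.smul_apply, smul_eq_mul]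
  linear_combination b.repr e 0 * key 0 j + b.repr e 1 * key 1 j
end
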